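/- The series ∑_{j=1}^∞ j · (1 − lcm(1,…,j−1)/lcm(1,…,j)) · (1/lcm(1,…,j−1)) converges. -/
import Mathlib


lemma coprime_succ_aux (m : ℕ) : Nat.Coprime m (m + 1) := by
  have h := Nat.dvd_sub (Nat.gcd_dvd_right m (m + 1)) (Nat.gcd_dvd_left m (m + 1))
  simp only [Nat.add_sub_cancel_left] at h
  exact Nat.dvd_one.mp h

/-- With `L j = lcm(1,…,j)` (so `L 0 = 1`), the series
`∑_{j=1}^∞ j · (1 − L (j−1) / L j) · (1 / L (j−1))` converges.  (This series
equals `Ave(ℤ)`.) -/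
theorem summable_residual_average_int (L : ℕ → ℕ)
    (hL : ∀ j, L j = (Finset.Icc 1 j).lcm id) :
    Summable (fun j : ℕ =>
      ((j : ℝ) + 1) * (1 - (L j : ℝ) / (L (j + 1) : ℝ)) * (1 / (L j : ℝ))) := by
  set f : ℕ → ℝ := fun j : ℕ =>
      ((j : ℝ) + 1) * (1 - (L j : ℝ) / (L (j + 1) : ℝ)) * (1 / (L j : ℝ)) with hf
  -- positivity of L
  have hpos : ∀ j, 0 < L j := by
    intro j
    rw [hL]
    rcases Nat.eq_zero_or_pos ((Finset.Icc 1 j).lcm id) with h | h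
    · rw [Finset.lcm_eq_zero_iff] at h
      simp only [Set.mem_image, Finset.mem_coe, Finset.mem_Icc, id] at h
      omega
    · exact h
  -- L j divides L (j+1)
  have hdvd : ∀ j, L j ∣ L (j + 1) := by
    intro j
    rw [hL, hL]
    exact Finset.lcm_dvd fun b hb =>
      Finset.dvd_lcm (Finset.mem_Icc.mpr (by simp at hb; omega))
  have hle : ∀ j, (L j : ℝ) ≤ (L (j + 1) : ℝ) := fun j =>
    Nat.cast_le.mpr (Nat.le_of_dvd (hpos _) (hdvd j))
  have hq : ∀ j, (L j : ℝ) / (L (j + 1) : ℝ) ≤ 1 := fun j =>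
    div_le_one_of_le₀ (hle j) (by positivity)
  have hq0 : ∀ j, 0 ≤ (L j : ℝ) / (L (j + 1) : ℝ) := fun j => by positivity
  have hfnonneg : ∀ j, 0 ≤ f j := by
    intro j
    apply mul_nonneg (mul_nonneg (by positivity) (by linarith [hq j]))
    positivity
  -- lower bound on L (n+4)
  have key : ∀ n : ℕ, (n + 4) * (n + 3) * (n + 2) ∣ 2 * L (n + 4) := by
    intro n
    have ha : (n + 4) ∣ L (n + 4) := by
      rw [hL]; exact Finset.dvd_lcm (Finset.mem_Icc.mpr (by omega))
    have hb : (n + 3) ∣ L (n + 4) := by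
      rw [hL]; exact Finset.dvd_lcm (Finset.mem_Icc.mpr (by omega))
    have hc : (n + 2) ∣ L (n + 4) := by
      rw [hL]; exact Finset.dvd_lcm (Finset.mem_Icc.mpr (by omega))
    have hgcd : Nat.gcd (n + 4) (n + 2) ∣ 2 := by
      have := Nat.dvd_sub (Nat.gcd_dvd_left (n + 4) (n + 2))
        (Nat.gcd_dvd_right (n + 4) (n + 2))
      simpa using this
    have hlcm : Nat.lcm (n + 4) (n + 2) ∣ L (n + 4) := Nat.lcm_dvd ha hc
    have hac : (n + 4) * (n + 2) ∣ 2 * L (n + 4) := by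
      rw [← Nat.gcd_mul_lcm (n + 4) (n + 2)]
      exact mul_dvd_mul hgcd hlcm
    have hcopba : Nat.Coprime (n + 3) (n + 4) := coprime_succ_aux (n + 3)
    have hcopbc : Nat.Coprime (n + 3) (n + 2) := (coprime_succ_aux (n + 2)).symm
    have hcop : Nat.Coprime (n + 3) ((n + 4) * (n + 2)) := hcopba.mul_right hcopbc
    have hb2 : (n + 3) ∣ 2 * L (n + 4) := hb.mul_left 2
    have := hcop.mul_dvd_of_dvd_of_dvd hb2 hac
    calc (n + 4) * (n + 3) * (n + 2) = (n + 3) * ((n + 4) * (n + 2)) := by ring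
      _ ∣ 2 * L (n + 4) := this
  -- comparison
  rw [← summable_nat_add_iff 4]
  have hmaj : Summable (fun n : ℕ => 16 / ((n : ℝ) + 1) ^ 2) := by
    have h1 : Summable (fun n : ℕ => 1 / (n : ℝ) ^ 2) :=
      (Real.summable_one_div_nat_pow).mpr one_lt_two
    have h2 := (summable_nat_add_iff 1).mpr (h1.mul_left 16)
    apply h2.congr
    intro n
    push_cast
    ring
  apply Summable.of_nonneg_of_le (fun n => hfnonneg (n + 4)) _ hmaj
  intro n
  have hLlb : ((n : ℝ) + 4) * ((n : ℝ) + 3) * ((n : ℝ) + 2) ≤ 2 * (L (n + 4) : ℝ) := by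
    have h0 := Nat.le_of_dvd (by have := hpos (n + 4); omega) (key n)
    have h1 : (((n + 4) * (n + 3) * (n + 2) : ℕ) : ℝ) ≤ ((2 * L (n + 4) : ℕ) : ℝ) :=
      Nat.cast_le.mpr h0
    push_cast at h1
    linarith
  have hLpos : (0 : ℝ) < (L (n + 4) : ℝ) := by exact_mod_cast hpos (n + 4)
  have step1 : f (n + 4) ≤ (((n : ℝ) + 4) + 1) * (1 / (L (n + 4) : ℝ)) := by
    have h1 : (1 : ℝ) - (L (n + 4) : ℝ) / (L (n + 4 + 1) : ℝ) ≤ 1 := by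
      linarith [hq0 (n + 4)]
    have h2 : (0 : ℝ) ≤ 1 / (L (n + 4) : ℝ) := by positivity
    have h3 : (0 : ℝ) ≤ ((n : ℝ) + 4) + 1 := by positivity
    calc f (n + 4) = (((n : ℝ) + 4) + 1) * (1 - (L (n + 4) : ℝ) / (L (n + 4 + 1) : ℝ))
          * (1 / (L (n + 4) : ℝ)) := by simp only [hf]; push_cast; ring
      _ ≤ (((n : ℝ) + 4) + 1) * 1 * (1 / (L (n + 4) : ℝ)) := by
          apply mul_le_mul_of_nonneg_right _ h2
          exact mul_le_mul_of_nonneg_left h1 h3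
      _ = (((n : ℝ) + 4) + 1) * (1 / (L (n + 4) : ℝ)) := by ring
  refine step1.trans ?_
  rw [mul_one_div, div_le_div_iff₀ hLpos (by positivity)]
  have hn : (0 : ℝ) ≤ (n : ℝ) := Nat.cast_nonneg n
  nlinarith [hLlb, hn, sq_nonneg ((n:ℝ)+1), mul_nonneg hn hn, mul_nonneg (mul_nonneg hn hn) hn]
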